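/- Let r ≥ 2 and set F = {x ∈ ℝʳ : Σ_{k=1}^r exp(2 x_k) = 1} and Π₋ = {y ∈ ℝʳ : sinh(y₁) = Σ_{k=2}^r exp(y_k)}. Then the affine map A : ℝʳ → ℝʳ given by A(x) = (−x₁, 2x₂ − x₁ − log 2, 2x₃ − x₁ − log 2, …, 2x_r − x₁ − log 2) restricts to a bijection from F onto Π₋. -/
import Mathlib

open Real Finset in
theorem aux_stmt7 {r : ℕ} (z : Fin r) :
    Set.BijOn
      (fun x : Fin r → ℝ => fun k : Fin r =>
        if k = z then -x z else 2 * x k - x z - Real.log 2)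
      {x : Fin r → ℝ | ∑ k, Real.exp (2 * x k) = 1}
      {y : Fin r → ℝ | Real.sinh (y z) =
        ∑ k ∈ Finset.univ.filter (fun k : Fin r => k ≠ z), Real.exp (y k)} := by
  have hfil : (Finset.univ.filter (fun k : Fin r => k ≠ z)) = Finset.univ.erase z :=
    Finset.filter_ne' _ _
  refine ⟨?_, ?_, ?_⟩
  · intro x hx
    simp only [Set.mem_setOf_eq] at hx ⊢
    rw [hfil]
    simp only [if_true]
    have hsplit : Real.exp (2 * x z) + ∑ k ∈ Finset.univ.erase z, Real.exp (2 * x k) = 1 := by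
      exact (Finset.add_sum_erase _ (fun k => Real.exp (2 * x k)) (Finset.mem_univ z)).trans hx
    have hsum : ∑ k ∈ Finset.univ.erase z,
        Real.exp (if k = z then -x z else 2 * x k - x z - Real.log 2)
        = ∑ k ∈ Finset.univ.erase z, Real.exp (2 * x k) / Real.exp (x z) / 2 := by
      refine Finset.sum_congr rfl fun k hk => ?_
      rw [if_neg (Finset.ne_of_mem_erase hk), Real.exp_sub, Real.exp_sub,
        Real.exp_log (by norm_num)]
    rw [hsum, ← Finset.sum_div, ← Finset.sum_div]
    have he : (0:ℝ) < Real.exp (x z) := Real.exp_pos _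
    rw [Real.sinh_eq, Real.exp_neg]
    have h2 : Real.exp (2 * x z) = Real.exp (x z) * Real.exp (x z) := by
      rw [two_mul, Real.exp_add]
    field_simp
    nlinarith [hsplit, h2]
  · intro a ha b hb hab
    have h0 : a z = b z := by
      have := congrFun hab z
      simp only [if_true] at this
      linarith
    funext k
    by_cases hk : k = z
    · rw [hk, h0]
    · have := congrFun hab k
      simp only [if_neg hk] at this
      linarith
  · intro y hy
    simp only [Set.mem_setOf_eq] at hy
    refine ⟨fun k => if k = z then -y z else (y k - y z + Real.log 2) / 2, ?_, ?_⟩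
    · simp only [Set.mem_setOf_eq]
      rw [← Finset.add_sum_erase _ _ (Finset.mem_univ z)]
      simp only [if_true]
      have hsum : ∑ k ∈ Finset.univ.erase z,
          Real.exp (2 * (if k = z then -y z else (y k - y z + Real.log 2) / 2))
          = ∑ k ∈ Finset.univ.erase z, Real.exp (y k) * 2 / Real.exp (y z) := by
        refine Finset.sum_congr rfl fun k hk => ?_
        rw [if_neg (Finset.ne_of_mem_erase hk)]
        rw [show 2 * ((y k - y z + Real.log 2) / 2) = y k - y z + Real.log 2 by ring,
          Real.exp_add, Real.exp_sub, Real.exp_log (by norm_num)]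
        ring
      rw [hsum, ← Finset.sum_div, ← Finset.sum_mul, ← hfil, ← hy]
      have he : (0:ℝ) < Real.exp (y z) := Real.exp_pos _
      rw [Real.sinh_eq, Real.exp_neg]
      have h2 : Real.exp (2 * -y z) = (Real.exp (y z))⁻¹ * (Real.exp (y z))⁻¹ := by
        rw [two_mul, Real.exp_add, Real.exp_neg]
      rw [h2]
      field_simp
      ring
    · funext k
      by_cases hk : k = z
      · subst hk
        simp only [if_true]
        ring
      · simp only [if_neg hk, if_true]
        ring

theorem stmt_7 {r : ℕ} (hr : 2 ≤ r) :
    Set.BijOn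
      (fun x : Fin r → ℝ => fun k : Fin r =>
        if k = (⟨0, by omega⟩ : Fin r) then -x ⟨0, by omega⟩
        else 2 * x k - x ⟨0, by omega⟩ - Real.log 2)
      {x : Fin r → ℝ | ∑ k, Real.exp (2 * x k) = 1}
      {y : Fin r → ℝ | Real.sinh (y ⟨0, by omega⟩) =
        ∑ k ∈ Finset.univ.filter (fun k : Fin r => k ≠ ⟨0, by omega⟩), Real.exp (y k)} := by
  exact aux_stmt7 _
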